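/- Let S be a boolean n×n matrix of silent steps, ρ a boolean termination column vector, V a surjective boolean n×N collector, and Π = S*. If VVᵀΠV = ΠV and VVᵀΠρ = Πρ, then (VᵀSV)* (Vᵀρ) = Vᵀ Π ρ. -/

import Mathlib

open Matrix

instance : CommSemiring Prop where
  add a b := a ∨ b
  add_assoc a b c := propext or_assoc
  zero := False
  zero_add a := false_or a
  add_zero a := or_false a
  add_comm a b := propext or_comm
  nsmul n p := n ≠ 0 ∧ p
  nsmul_zero p := by show ((0:ℕ) ≠ 0 ∧ p) = False; simp
  nsmul_succ n p := by
    show ((n + 1 : ℕ) ≠ 0 ∧ p) = ((n ≠ 0 ∧ p) ∨ p)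
    by_cases h : n = 0 <;> simp [h]
  mul a b := a ∧ b
  mul_assoc a b c := propext and_assoc
  one := True
  one_mul a := true_and a
  mul_one a := and_true a
  left_distrib a b c := propext and_or_left
  right_distrib a b c := propext or_and_right
  zero_mul a := false_and a
  mul_zero a := and_false a
  mul_comm a b := propext and_comm

instance {α : Type*} : CommSemiring (Set α) where
  add a b := a ∪ b
  add_assoc := Set.union_assoc
  zero := (∅ : Set α)
  zero_add := Set.empty_union
  add_zero := Set.union_empty
  add_comm := Set.union_comm
  nsmul n s := {x ∈ s | n ≠ 0}
  nsmul_zero s := by show {x ∈ s | (0:ℕ) ≠ 0} = (∅ : Set α); simp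
  nsmul_succ n s := by
    show {x ∈ s | (n + 1 : ℕ) ≠ 0} = {x ∈ s | n ≠ 0} ∪ s
    by_cases h : n = 0 <;> ext x <;> simp [h]
  mul a b := a ∩ b
  mul_assoc := Set.inter_assoc
  one := (Set.univ : Set α)
  one_mul := Set.univ_inter
  mul_one := Set.inter_univ
  left_distrib := Set.inter_union_distrib_left
  right_distrib := Set.union_inter_distrib_right
  zero_mul := Set.empty_inter
  mul_zero := Set.inter_empty
  mul_comm := Set.inter_comm

/-- Reflexive-transitive closure `S* = Σ_{k ≥ 0} S^k` of a boolean matrix. -/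
def mstar {n : ℕ} (S : Matrix (Fin n) (Fin n) Prop) : Matrix (Fin n) (Fin n) Prop :=
  Matrix.of fun i j => ∃ k : ℕ, (S ^ k) i j


lemma prop_sum {α : Type*} (s : Finset α) (f : α → Prop) :
    s.sum f ↔ ∃ x ∈ s, f x := by
  classical
  induction s using Finset.induction_on with
  | empty =>
    rw [Finset.sum_empty]
    constructor
    · intro h; exact (show False from h).elim
    · rintro ⟨x, hx, _⟩; exact absurd hx (Finset.notMem_empty x)
  | insert a s h ih =>
    rw [Finset.sum_insert h]
    constructor
    · intro hs
      rcases (show f a ∨ s.sum f from hs) with h' | h'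
      · exact ⟨a, Finset.mem_insert_self a s, h'⟩
      · obtain ⟨x, hx, hfx⟩ := ih.mp h'
        exact ⟨x, Finset.mem_insert_of_mem hx, hfx⟩
    · rintro ⟨x, hx, hfx⟩
      rcases Finset.mem_insert.mp hx with rfl | hx
      · exact (show f x ∨ s.sum f from Or.inl hfx)
      · exact (show f a ∨ s.sum f from Or.inr (ih.mpr ⟨x, hx, hfx⟩))

lemma mulP {a b c : ℕ} (A : Matrix (Fin a) (Fin b) Prop)
    (B : Matrix (Fin b) (Fin c) Prop) (i : Fin a) (j : Fin c) :
    (A * B) i j ↔ ∃ k, A i k ∧ B k j := by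
  rw [Matrix.mul_apply, prop_sum]
  constructor
  · rintro ⟨k, -, h⟩; exact ⟨k, h⟩
  · rintro ⟨k, h⟩; exact ⟨k, Finset.mem_univ k, h⟩

lemma oneP {a : ℕ} (i j : Fin a) : (1 : Matrix (Fin a) (Fin a) Prop) i j ↔ i = j := by
  rcases eq_or_ne i j with rfl | h
  · rw [Matrix.one_apply_eq]; exact ⟨fun _ => rfl, fun _ => trivial⟩
  · rw [Matrix.one_apply_ne h]
    exact ⟨fun hf => (show False from hf).elim, fun he => absurd he h⟩

/-- soundness of weak lumping for the termination vector:
`(VᵀSV)* (Vᵀρ) = VᵀΠρ`. -/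
theorem weak_lumping_sound_termination {n N : ℕ}
    (S : Matrix (Fin n) (Fin n) Prop) (ρ : Matrix (Fin n) (Fin 1) Prop)
    (V : Matrix (Fin n) (Fin N) Prop)
    (hcol : ∀ i, ∃! j, V i j) (hsurj : ∀ j, ∃ i, V i j)
    (h₁ : V * Vᵀ * mstar S * V = mstar S * V)
    (h₃ : V * Vᵀ * mstar S * ρ = mstar S * ρ) :
    mstar (Vᵀ * S * V) * (Vᵀ * ρ) = Vᵀ * mstar S * ρ := by
  apply Matrix.ext
  intro j z
  -- abbreviations
  set T := Vᵀ * S * V with hT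
  -- basic facts about R i := (mstar S * ρ) i 0
  have Rdef : ∀ i, (mstar S * ρ) i z ↔ ∃ k : ℕ, (S ^ k * ρ) i z := by
    intro i
    rw [mulP]
    constructor
    · rintro ⟨i', ⟨k, hk⟩, hρ⟩; exact ⟨k, (mulP _ _ _ _).mpr ⟨i', hk, hρ⟩⟩
    · rintro ⟨k, hk⟩
      obtain ⟨i', h1, h2⟩ := (mulP _ _ _ _).mp hk
      exact ⟨i', ⟨k, h1⟩, h2⟩
  have R_of_ρ : ∀ i, ρ i z → (mstar S * ρ) i z := by
    intro i h
    exact (Rdef i).mpr ⟨0, (mulP _ _ _ _).mpr ⟨i, (oneP i i).mpr rfl, h⟩⟩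
  have R_step : ∀ i i', S i i' → (mstar S * ρ) i' z → (mstar S * ρ) i z := by
    intro i i' hS hR
    obtain ⟨k, hk⟩ := (Rdef i').mp hR
    refine (Rdef i).mpr ⟨k + 1, ?_⟩
    rw [pow_succ', Matrix.mul_assoc]
    exact (mulP _ _ _ _).mpr ⟨i', hS, hk⟩
  -- class transfer from h₃
  have R_class : ∀ b c jc, V b jc → V c jc → (mstar S * ρ) c z → (mstar S * ρ) b z := by
    intro b c jc hb hc hR
    have hfun := congrFun (congrFun h₃ b) z
    rw [Matrix.mul_assoc (V * Vᵀ) (mstar S) ρ] at hfun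
    rw [← hfun]
    refine (mulP _ _ _ _).mpr ⟨c, ?_, hR⟩
    exact (mulP _ _ _ _).mpr ⟨jc, hb, hc⟩
  apply propext
  rw [Matrix.mul_assoc, mulP, mulP]
  constructor
  · rintro ⟨j', ⟨k, hk⟩, hρ'⟩
    -- forward: (T^k) j j' and (Vᵀρ) j' imply (Vᵀ (mstar S * ρ)) j
    obtain ⟨i', hi'⟩ := (mulP _ _ _ _).mp hρ'
    have base : ∃ i, Vᵀ j' i ∧ (mstar S * ρ) i z := ⟨i', hi'.1, R_of_ρ i' hi'.2⟩
    clear hρ' hi'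
    induction k generalizing j with
    | zero =>
      have : j = j' := (oneP j j').mp hk
      subst this
      obtain ⟨i, hi, hR⟩ := base
      exact ⟨i, hi, hR⟩
    | succ k ih =>
      rw [pow_succ'] at hk
      obtain ⟨j'', hTj, hk'⟩ := (mulP _ _ _ _).mp hk
      obtain ⟨i, hi, hR⟩ := ih j'' hk'
      -- T j j'' : ∃ a, (Vᵀ * S) j a ∧ V a j''
      obtain ⟨a, hja, haj''⟩ := (mulP _ _ _ _).mp hTj
      obtain ⟨b, hbj, hSba⟩ := (mulP _ _ _ _).mp hja
      -- a and i are both in class j''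
      have hRa : (mstar S * ρ) a z := R_class a i j'' haj'' hi hR
      exact ⟨b, hbj, R_step b a hSba hRa⟩
  · rintro ⟨i, hij, hR⟩
    obtain ⟨k, hk⟩ := (Rdef i).mp hR
    clear hR
    induction k generalizing i j with
    | zero =>
      obtain ⟨x, hx, hρx⟩ := (mulP _ _ _ _).mp hk
      have : i = x := (oneP i x).mp hx
      subst this
      refine ⟨j, ⟨0, (oneP j j).mpr rfl⟩, (mulP _ _ _ _).mpr ⟨i, hij, hρx⟩⟩
    | succ k ih =>
      rw [pow_succ', Matrix.mul_assoc] at hk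
      obtain ⟨i', hSii', hk'⟩ := (mulP _ _ _ _).mp hk
      obtain ⟨j', hij', -⟩ := hcol i'
      obtain ⟨j₂, ⟨m, hm⟩, hρ₂⟩ := ih j' i' hij' hk'
      refine ⟨j₂, ⟨m + 1, ?_⟩, hρ₂⟩
      rw [pow_succ']
      refine (mulP _ _ _ _).mpr ⟨j', ?_, hm⟩
      exact (mulP _ _ _ _).mpr ⟨i', (mulP _ _ _ _).mpr ⟨i, hij, hSii'⟩, hij'⟩
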